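/- Let (H₋, H₊, Γ₋, Γ₊) be a boundary quadruple for a densely defined skew-symmetric operator A₀ on a Hilbert space V, with A = (−A₀)*. If Φ₁, Φ₂ : H₋ → H₊ are linear contractions such that A_{Φ₁} ⊆ A_{Φ₂}, then Φ₁ = Φ₂. -/
import Mathlib


variable {𝕜 V : Type*} [RCLike 𝕜] [NormedAddCommGroup V] [InnerProductSpace 𝕜 V]
  [CompleteSpace V]

/-- An operator `A` on `V` is *skew-symmetric* if `⟪Au, v⟫ + ⟪u, Av⟫ = 0` for all
`u, v ∈ D(A)`. -/
def SkewSymmetric (A : V →ₗ.[𝕜] V) : Prop :=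
  ∀ u v : A.domain, @inner 𝕜 _ _ (A u) (v : V) + @inner 𝕜 _ _ (u : V) (A v) = 0

/-- A *boundary quadruple* `(H₋, H₊, Γ₋, Γ₊)` for a densely defined skew-symmetric operator
`A₀` (here expressed via `A := (-A₀)*`) consists of pre-Hilbert spaces `H₋, H₊` and surjective
linear maps `Γ₋ : D(A) → H₋`, `Γ₊ : D(A) → H₊` such that
`⟪Au, v⟫ + ⟪u, Av⟫ = ⟪Γ₊u, Γ₊v⟫ - ⟪Γ₋u, Γ₋v⟫` for all `u, v ∈ D(A)` and
`ker Γ₋ + ker Γ₊ = D(A)`. -/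
def IsBoundaryQuadruple (A : V →ₗ.[𝕜] V) {Hm Hp : Type*}
    [NormedAddCommGroup Hm] [InnerProductSpace 𝕜 Hm]
    [NormedAddCommGroup Hp] [InnerProductSpace 𝕜 Hp]
    (Γm : A.domain →ₗ[𝕜] Hm) (Γp : A.domain →ₗ[𝕜] Hp) : Prop :=
  Function.Surjective Γm ∧ Function.Surjective Γp ∧
    (∀ u v : A.domain,
      @inner 𝕜 _ _ (A u) (v : V) + @inner 𝕜 _ _ (u : V) (A v) =
        @inner 𝕜 _ _ (Γp u) (Γp v) - @inner 𝕜 _ _ (Γm u) (Γm v)) ∧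
    LinearMap.ker Γm ⊔ LinearMap.ker Γp = ⊤

/-- The operator `A_Φ` determines the contraction `Φ`: if `Φ₁, Φ₂ : H₋ → H₊` are linear
contractions with `A_{Φ₁} ⊆ A_{Φ₂}` (i.e. every `w ∈ D(A)` with `Φ₁ Γ₋ w = Γ₊ w` also
satisfies `Φ₂ Γ₋ w = Γ₊ w`), then `Φ₁ = Φ₂`. -/
theorem contraction_determined_by_extension {Hm Hp : Type*}
    [NormedAddCommGroup Hm] [InnerProductSpace 𝕜 Hm]
    [NormedAddCommGroup Hp] [InnerProductSpace 𝕜 Hp]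
    (A₀ : V →ₗ.[𝕜] V) (hdense : Dense (A₀.domain : Set V)) (hskew : SkewSymmetric A₀)
    (Γm : ((-A₀).adjoint).domain →ₗ[𝕜] Hm) (Γp : ((-A₀).adjoint).domain →ₗ[𝕜] Hp)
    (hq : IsBoundaryQuadruple (-A₀).adjoint Γm Γp)
    (Φ₁ Φ₂ : Hm →ₗ[𝕜] Hp)
    (hΦ₁ : ∀ x, ‖Φ₁ x‖ ≤ ‖x‖) (hΦ₂ : ∀ x, ‖Φ₂ x‖ ≤ ‖x‖)
    (hsub : ∀ w : ((-A₀).adjoint).domain, Φ₁ (Γm w) = Γp w → Φ₂ (Γm w) = Γp w) :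
    Φ₁ = Φ₂ := by
  obtain ⟨hΓm, hΓp, _, hker⟩ := hq
  ext x
  -- find u with Γm u = x
  obtain ⟨u, hu⟩ := hΓm x
  -- find v with Γp v = Φ₁ x - Γp u
  obtain ⟨v, hv⟩ := hΓp (Φ₁ x - Γp u)
  -- decompose v = v₁ + v₂ with v₁ ∈ ker Γm, v₂ ∈ ker Γp
  have hvmem : v ∈ LinearMap.ker Γm ⊔ LinearMap.ker Γp := by rw [hker]; trivial
  obtain ⟨v₁, hv₁, v₂, hv₂, hsum⟩ := Submodule.mem_sup.mp hvmem
  rw [LinearMap.mem_ker] at hv₁ hv₂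
  set w := u + v₁ with hw
  have hΓmw : Γm w = x := by simp [hw, map_add, hv₁, hu]
  have hΓpv₁ : Γp v₁ = Γp v := by
    rw [← hsum, map_add, hv₂, add_zero]
  have hΓpw : Γp w = Φ₁ x := by
    simp [hw, map_add, hΓpv₁, hv]
  have h1 : Φ₁ (Γm w) = Γp w := by rw [hΓmw, hΓpw]
  have h2 := hsub w h1
  rw [hΓmw, hΓpw] at h2
  exact h2.symm
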